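/- arXiv:1607.00066 — 5 statements merged into one kernel-verified Lean document; each statement's English description precedes it below -/
import Mathlib

section
/- Let n > 0 and let λ_1 ≤ λ_2 ≤ ... ≤ λ_{k+1} be positive reals satisfying ∑_{i=1}^k (λ_{k+1} - λ_i)² ≤ (4/n) ∑_{i=1}^k (λ_{k+1} - λ_i) λ_i. Then λ_{k+1} ≤ (1/k)(1 + 4/n) ∑_{i=1}^k λ_i. -/
theorem stmt_1 (n : ℝ) (k : ℕ) (lam : ℕ → ℝ)
    (hn : 0 < n) (hk : 0 < k)
    (hpos : ∀ i ∈ Finset.Icc 1 (k+1), 0 < lam i)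
    (hmono : ∀ i j, 1 ≤ i → i ≤ j → j ≤ k+1 → lam i ≤ lam j)
    (hyang : ∑ i ∈ Finset.Icc 1 k, (lam (k+1) - lam i)^2 ≤
      (4/n) * ∑ i ∈ Finset.Icc 1 k, (lam (k+1) - lam i) * lam i) :
    lam (k+1) ≤ (1/(k:ℝ)) * (1 + 4/n) * ∑ i ∈ Finset.Icc 1 k, lam i := by
  set s := Finset.Icc 1 k with hs
  set Λ := lam (k+1) with hΛ
  set S := ∑ i ∈ s, lam i with hS
  set A := ∑ i ∈ s, (Λ - lam i) with hA
  have hcard : (s.card : ℝ) = k := by simp [hs]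
  have hmem : ∀ i ∈ s, 1 ≤ i ∧ i ≤ k := by
    intro i hi; simpa [hs] using hi
  have hSpos : 0 < S := by
    apply Finset.sum_pos
    · intro i hi
      obtain ⟨h1, h2⟩ := hmem i hi
      exact hpos i (Finset.mem_Icc.2 ⟨h1, h2.trans (Nat.le_succ _)⟩)
    · exact Finset.nonempty_Icc.2 hk
  have hAnn : 0 ≤ A := by
    apply Finset.sum_nonneg
    intro i hi
    obtain ⟨h1, h2⟩ := hmem i hi
    have := hmono i (k+1) h1 (h2.trans (Nat.le_succ _)) le_rfl
    linarith
  -- Cauchy–Schwarz: A^2 ≤ k * ∑ (Λ - λ i)^2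
  have hCS : A^2 ≤ (k:ℝ) * ∑ i ∈ s, (Λ - lam i)^2 := by
    have := sq_sum_le_card_mul_sum_sq (s := s) (f := fun i => Λ - lam i)
    rwa [hcard] at this
  -- Chebyshev: k * ∑ (Λ - λ i) * λ i ≤ A * S
  have hCheb : (k:ℝ) * ∑ i ∈ s, (Λ - lam i) * lam i ≤ A * S := by
    have hanti : AntivaryOn (fun i => Λ - lam i) lam s := by
      intro i _ j _ hij
      simp only
      linarith
    have := hanti.card_mul_sum_le_sum_mul_sum
    rwa [hcard] at this
  have h4n : 0 < 4/n := by positivity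
  -- combine: A^2 ≤ (4/n) * A * S
  have hkey : A^2 ≤ (4/n) * A * S := by
    have h1 : A^2 ≤ (k:ℝ) * ((4/n) * ∑ i ∈ s, (Λ - lam i) * lam i) := by
      refine hCS.trans ?_
      have hkpos : (0:ℝ) ≤ (k:ℝ) := Nat.cast_nonneg k
      nlinarith [hyang]
    have h2 : (k:ℝ) * ((4/n) * ∑ i ∈ s, (Λ - lam i) * lam i) ≤ (4/n) * (A * S) := by
      calc (k:ℝ) * ((4/n) * ∑ i ∈ s, (Λ - lam i) * lam i)
          = (4/n) * ((k:ℝ) * ∑ i ∈ s, (Λ - lam i) * lam i) := by ring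
        _ ≤ (4/n) * (A * S) := by
            exact mul_le_mul_of_nonneg_left hCheb (le_of_lt h4n)
    linarith
  have hA_le : A ≤ (4/n) * S := by
    rcases eq_or_lt_of_le hAnn with h | h
    · rw [← h]; positivity
    · nlinarith
  have hsum : A = (k:ℝ) * Λ - S := by
    rw [hA, Finset.sum_sub_distrib, Finset.sum_const, hs]
    simp [nsmul_eq_mul, hS, hs]
  have hkpos : (0:ℝ) < (k:ℝ) := by exact_mod_cast hk
  have hfin : (k:ℝ) * Λ ≤ (1 + 4/n) * S := by
    rw [hsum] at hA_le; linarith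
  rw [show (1/(k:ℝ))*(1+4/n)*S = ((1+4/n)*S)/k by ring, le_div_iff₀ hkpos]
  linarith
end

section
/- Let n > 0, k a positive integer, and λ_1 ≤ ... ≤ λ_{k+1} positive reals satisfying ∑_{i=1}^k (λ_{k+1} - λ_i)² ≤ (4/n) ∑_{i=1}^k (λ_{k+1} - λ_i) λ_i. Then λ_{k+1} ≤ (1/k)(1 + 2/n) ∑_{i=1}^k λ_i + sqrt( ((2/(kn)) ∑_{i=1}^k λ_i)² - (1/k)(1 + 4/n) ∑_{j=1}^k (λ_j - (1/k)∑_{i=1}^k λ_i)² ). -/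
theorem stmt_4 (n : ℝ) (k : ℕ) (lam : ℕ → ℝ)
    (hn : 0 < n) (hk : 0 < k)
    (hpos : ∀ i ∈ Finset.Icc 1 (k+1), 0 < lam i)
    (hmono : ∀ i j, 1 ≤ i → i ≤ j → j ≤ k+1 → lam i ≤ lam j)
    (hyang : ∑ i ∈ Finset.Icc 1 k, (lam (k+1) - lam i)^2 ≤
      (4/n) * ∑ i ∈ Finset.Icc 1 k, (lam (k+1) - lam i) * lam i) :
    lam (k+1) ≤ (1/(k:ℝ)) * (1 + 2/n) * ∑ i ∈ Finset.Icc 1 k, lam i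
      + Real.sqrt (((2/((k:ℝ)*n)) * ∑ i ∈ Finset.Icc 1 k, lam i)^2
        - (1/(k:ℝ)) * (1 + 4/n) *
          ∑ j ∈ Finset.Icc 1 k, (lam j - (1/(k:ℝ)) * ∑ i ∈ Finset.Icc 1 k, lam i)^2) := by
  have hk' : (0:ℝ) < k := by exact_mod_cast hk
  set S := ∑ i ∈ Finset.Icc 1 k, lam i with hS
  set Q := ∑ i ∈ Finset.Icc 1 k, (lam i)^2 with hQ
  set L := lam (k+1) with hL
  have hcard : ((Finset.Icc 1 k).card : ℝ) = k := by
    rw [Nat.card_Icc]; push_cast; ring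
  have h1 : ∑ i ∈ Finset.Icc 1 k, (L - lam i)^2 = k*L^2 - 2*L*S + Q := by
    have : ∀ i ∈ Finset.Icc 1 k, (L - lam i)^2 = L^2 - 2*L*(lam i) + (lam i)^2 := by
      intro i _; ring
    rw [Finset.sum_congr rfl this, Finset.sum_add_distrib, Finset.sum_sub_distrib,
      Finset.sum_const, ← Finset.mul_sum]
    simp only [nsmul_eq_mul, hcard]; rfl
  have h2 : ∑ i ∈ Finset.Icc 1 k, (L - lam i) * lam i = L*S - Q := by
    have : ∀ i ∈ Finset.Icc 1 k, (L - lam i) * lam i = L*(lam i) - (lam i)^2 := by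
      intro i _; ring
    rw [Finset.sum_congr rfl this, Finset.sum_sub_distrib, ← Finset.mul_sum]
  rw [h1, h2] at hyang
  have key : (k:ℝ)*L^2 - 2*(1+2/n)*S*L + (1+4/n)*Q ≤ 0 := by
    have hn' : n ≠ 0 := ne_of_gt hn
    have h := hyang
    rw [div_mul_eq_mul_div, le_div_iff₀ hn] at h
    have h2 : ((k:ℝ)*L^2 - 2*(1+2/n)*S*L + (1+4/n)*Q) * n ≤ 0 * n := by
      have he : ((k:ℝ)*L^2 - 2*(1+2/n)*S*L + (1+4/n)*Q) * n
          = (↑k * L ^ 2 - 2 * L * S + Q) * n - 4 * (L * S - Q) := by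
        field_simp; ring
      rw [he, zero_mul]; linarith
    exact le_of_mul_le_mul_right h2 hn
  have hD : ((k:ℝ)*L - (1+2/n)*S)^2 ≤ (1+2/n)^2*S^2 - k*(1+4/n)*Q := by
    nlinarith [mul_le_mul_of_nonneg_left key hk'.le]
  set D := (1+2/n)^2*S^2 - (k:ℝ)*(1+4/n)*Q with hDdef
  have hD0 : 0 ≤ D := le_trans (sq_nonneg _) hD
  have hle : (k:ℝ)*L - (1+2/n)*S ≤ Real.sqrt D := by
    have := Real.sqrt_le_sqrt hD
    rw [Real.sqrt_sq_eq_abs] at this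
    calc (k:ℝ)*L - (1+2/n)*S ≤ |(k:ℝ)*L - (1+2/n)*S| := le_abs_self _
      _ ≤ Real.sqrt D := this
  have h3 : ∑ j ∈ Finset.Icc 1 k, (lam j - (1/(k:ℝ)) * S)^2 = Q - S^2/k := by
    have : ∀ i ∈ Finset.Icc 1 k, (lam i - (1/(k:ℝ))*S)^2
        = (lam i)^2 - (2/k*S)*(lam i) + (S/k)^2 := by
      intro i _; field_simp; ring
    rw [Finset.sum_congr rfl this, Finset.sum_add_distrib, Finset.sum_sub_distrib,
      Finset.sum_const, ← Finset.mul_sum, nsmul_eq_mul, hcard]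
    field_simp
    ring
  have hE : ((2/((k:ℝ)*n)) * S)^2 - (1/(k:ℝ)) * (1 + 4/n) * (Q - S^2/k)
      = D * (1/(k:ℝ))^2 := by
    have hn' : n ≠ 0 := ne_of_gt hn
    have hk'' : (k:ℝ) ≠ 0 := ne_of_gt hk'
    rw [hDdef]; field_simp; ring
  rw [h3, hE, Real.sqrt_mul hD0, Real.sqrt_sq (by positivity)]
  have : L ≤ ((1+2/n)*S + Real.sqrt D) / k := by
    rw [le_div_iff₀ hk']
    linarith
  calc L ≤ ((1+2/n)*S + Real.sqrt D) / k := this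
    _ = 1/(k:ℝ) * (1+2/n) * S + Real.sqrt D * (1/(k:ℝ)) := by field_simp
end

section
/- Let n > 0, k a positive integer, and λ_1 ≤ ... ≤ λ_{k+1} positive reals such that for every m ≤ k the inequality ∑_{i=1}^m (λ_{m+1} - λ_i)² ≤ (4/n) ∑_{i=1}^m (λ_{m+1} - λ_i) λ_i holds. Then λ_{k+1} - λ_k ≤ 2 sqrt( ((2/(kn)) ∑_{i=1}^k λ_i)² - (1/k)(1 + 4/n) ∑_{j=1}^k (λ_j - (1/k)∑_{i=1}^k λ_i)² ). -/
open Finset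

-- if two points satisfy a*x^2 - b*x + c ≤ 0 with a>0, their gap squared is controlled
lemma aux_quad (a b c x y : ℝ) (ha : 0 < a)
    (hx : a*x^2 - b*x + c ≤ 0) (hy : a*y^2 - b*y + c ≤ 0) :
    a^2*(x-y)^2 ≤ b^2 - 4*a*c := by
  nlinarith [sq_nonneg (a*(x+y)-b), mul_le_mul_of_nonneg_left hx ha.le,
    mul_le_mul_of_nonneg_left hy ha.le]

theorem stmt_5 (n : ℝ) (k : ℕ) (lam : ℕ → ℝ)
    (hn : 0 < n) (hk : 0 < k)
    (hpos : ∀ i ∈ Finset.Icc 1 (k+1), 0 < lam i)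
    (hmono : ∀ i j, 1 ≤ i → i ≤ j → j ≤ k+1 → lam i ≤ lam j)
    (hyang : ∀ m, 1 ≤ m → m ≤ k →
      ∑ i ∈ Finset.Icc 1 m, (lam (m+1) - lam i)^2 ≤
        (4/n) * ∑ i ∈ Finset.Icc 1 m, (lam (m+1) - lam i) * lam i) :
    lam (k+1) - lam k ≤ 2 * Real.sqrt (((2/((k:ℝ)*n)) * ∑ i ∈ Finset.Icc 1 k, lam i)^2
        - (1/(k:ℝ)) * (1 + 4/n) *
          ∑ j ∈ Finset.Icc 1 k, (lam j - (1/(k:ℝ)) * ∑ i ∈ Finset.Icc 1 k, lam i)^2) := by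
  have hk0 : (0:ℝ) < (k:ℝ) := by exact_mod_cast hk
  set S : ℝ := ∑ i ∈ Finset.Icc 1 k, lam i with hS
  set Q : ℝ := ∑ i ∈ Finset.Icc 1 k, (lam i)^2 with hQ
  have hcard : (Finset.Icc 1 k).card = k := by simp
  have hexp : ∀ x : ℝ, ∑ i ∈ Finset.Icc 1 k, (x - lam i)^2 = k*x^2 - 2*x*S + Q := by
    intro x
    have : ∀ i ∈ Finset.Icc 1 k, (x - lam i)^2 = x^2 - 2*x*(lam i) + (lam i)^2 := by
      intro i _; ring
    rw [Finset.sum_congr rfl this, Finset.sum_add_distrib, Finset.sum_sub_distrib,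
      Finset.sum_const, ← Finset.mul_sum, hcard]
    ring
  have hexp2 : ∀ x : ℝ, ∑ i ∈ Finset.Icc 1 k, (x - lam i)*(lam i) = x*S - Q := by
    intro x
    have : ∀ i ∈ Finset.Icc 1 k, (x - lam i)*(lam i) = x*(lam i) - (lam i)^2 := by
      intro i _; ring
    rw [Finset.sum_congr rfl this, Finset.sum_sub_distrib, ← Finset.mul_sum]
  -- P(lam (k+1)) ≤ 0
  have h1 : (k:ℝ)*(lam (k+1))^2 - (2+4/n)*S*(lam (k+1)) + (1+4/n)*Q ≤ 0 := by
    have h := hyang k hk le_rfl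
    rw [hexp, hexp2] at h
    nlinarith [h]
  -- P(lam k) ≤ 0
  have hyk : ∑ i ∈ Finset.Icc 1 k, (lam k - lam i)^2 ≤
      (4/n) * ∑ i ∈ Finset.Icc 1 k, (lam k - lam i) * lam i := by
    obtain ⟨k', rfl⟩ : ∃ k', k = k' + 1 := ⟨k - 1, (Nat.succ_pred_eq_of_pos hk).symm⟩
    rcases Nat.eq_zero_or_pos k' with h0 | h0
    · subst h0; simp
    · rw [Finset.sum_Icc_succ_top (by omega), Finset.sum_Icc_succ_top (by omega)]
      simp only [sub_self]
      nlinarith [hyang k' h0 (by omega)]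
  have h2 : (k:ℝ)*(lam k)^2 - (2+4/n)*S*(lam k) + (1+4/n)*Q ≤ 0 := by
    rw [hexp, hexp2] at hyk
    nlinarith [hyk]
  have key := aux_quad (k:ℝ) ((2+4/n)*S) ((1+4/n)*Q) (lam (k+1)) (lam k) hk0 h1 h2
  -- variance identity
  have hvar : ∑ j ∈ Finset.Icc 1 k, (lam j - (1/(k:ℝ)) * S)^2 = Q - S^2/(k:ℝ) := by
    have : ∀ j ∈ Finset.Icc 1 k, (lam j - (1/(k:ℝ))*S)^2 = ((1/(k:ℝ))*S - lam j)^2 := by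
      intro j _; ring
    rw [Finset.sum_congr rfl this, hexp]
    field_simp
    ring
  set E : ℝ := ((2/((k:ℝ)*n)) * S)^2 - (1/(k:ℝ)) * (1 + 4/n) *
      ∑ j ∈ Finset.Icc 1 k, (lam j - (1/(k:ℝ)) * S)^2 with hE
  have hEid : 4*(k:ℝ)^2*E = ((2+4/n)*S)^2 - 4*(k:ℝ)*((1+4/n)*Q) := by
    rw [hE, hvar]
    field_simp
    ring
  clear_value E
  clear hE
  have hE4 : (lam (k+1) - lam k)^2 ≤ 4*E := by
    have h' : (k:ℝ)^2 * (lam (k+1) - lam k)^2 ≤ (k:ℝ)^2 * (4*E) := by nlinarith [key, hEid]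
    exact le_of_mul_le_mul_left h' (by positivity)
  have hEnn : 0 ≤ E := by nlinarith [sq_nonneg (lam (k+1) - lam k)]
  rcases le_or_gt (lam (k+1) - lam k) 0 with hle | hlt
  · exact hle.trans (by positivity)
  · have h4 : Real.sqrt ((lam (k+1) - lam k)^2) ≤ Real.sqrt (4*E) := Real.sqrt_le_sqrt hE4
    rw [Real.sqrt_sq hlt.le, show (4:ℝ)*E = 2^2*E by ring,
      Real.sqrt_mul (by positivity), Real.sqrt_sq (by norm_num)] at h4
    exact h4
end

section
/- Let n, c > 0 with C(n,k,c) = 1 - (c/(3n)) (k/(k+1))^{4c/n} (1 + 2c/n)(1 + 4c/n)/(k+1)³ for a positive integer k. Then 0 < C(n,k,c) < 1. -/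
theorem stmt_10 (n c : ℝ) (k : ℕ) (hn : 0 < n) (hc : 0 < c) (hk : 0 < k) :
    0 < 1 - (c/(3*n)) * ((k:ℝ)/((k:ℝ)+1))^(4*c/n) * ((1 + 2*c/n) * (1 + 4*c/n) / ((k:ℝ)+1)^3)
    ∧ 1 - (c/(3*n)) * ((k:ℝ)/((k:ℝ)+1))^(4*c/n) * ((1 + 2*c/n) * (1 + 4*c/n) / ((k:ℝ)+1)^3) < 1 := by
  have hk1 : (1:ℝ) ≤ (k:ℝ) := by exact_mod_cast hk
  set m : ℝ := (k:ℝ) + 1 with hm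
  have hm2 : (2:ℝ) ≤ m := by linarith
  have hm0 : (0:ℝ) < m := by linarith
  set x : ℝ := c / n with hx
  have hx0 : 0 < x := div_pos hc hn
  set t : ℝ := x / m with ht
  have ht0 : 0 < t := div_pos hx0 hm0
  have hxtm : x = t * m := by rw [ht, div_mul_cancel₀ x hm0.ne']
  clear_value t x m
  have hb : (k:ℝ)/m ≤ Real.exp (-(1/m)) := by
    have h1 := Real.add_one_le_exp (-(1/m))
    have h2 : (k:ℝ)/m = 1 - 1/m := by field_simp [hm]; linarith
    rw [h2]; linarith
  have hb0 : (0:ℝ) ≤ (k:ℝ)/m := by positivity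
  have he : (0:ℝ) ≤ 4*c/n := by positivity
  have hB : ((k:ℝ)/m)^(4*c/n) ≤ Real.exp (-(4*t)) := by
    calc ((k:ℝ)/m)^(4*c/n) ≤ (Real.exp (-(1/m)))^(4*c/n) :=
          Real.rpow_le_rpow hb0 hb he
    _ = Real.exp (-(1/m) * (4*c/n)) := (Real.exp_mul _ _).symm
    _ = Real.exp (-(4*t)) := by
        congr 1
        rw [ht, hx]
        field_simp
  have hBpos : (0:ℝ) < ((k:ℝ)/m)^(4*c/n) := by
    apply Real.rpow_pos_of_pos
    positivity
  have hsum : 1 + 4*t + (4*t)^2/2 + (4*t)^3/6 ≤ Real.exp (4*t) := by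
    have h := Real.sum_le_exp_of_nonneg (by positivity : (0:ℝ) ≤ 4*t) 4
    simp [Finset.sum_range_succ, Nat.factorial] at h
    linarith
  have hEpos : 0 < Real.exp (-(4*t)) := Real.exp_pos _
  have hE : Real.exp (-(4*t)) * Real.exp (4*t) = 1 := by
    rw [← Real.exp_add]; simp
  -- Step 1: bound P by (t/3)(1+2t)(1+4t) * exp(-4t)
  have hP1 : (c/(3*n)) * ((k:ℝ)/m)^(4*c/n) * ((1 + 2*c/n) * (1 + 4*c/n) / m^3)
      ≤ (t/3) * (1+2*t) * (1+4*t) * Real.exp (-(4*t)) := by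
    have hcn : c/(3*n) = x/3 := by rw [hx]; ring
    have h1 : (1 + 2*c/n) ≤ m * (1+2*t) := by
      have e : 2*c/n = 2*(t*m) := by rw [← hxtm, hx]; ring
      rw [e]; nlinarith
    have h2 : (1 + 4*c/n) ≤ m * (1+4*t) := by
      have e : 4*c/n = 4*(t*m) := by rw [← hxtm, hx]; ring
      rw [e]; nlinarith
    have hfac : (1 + 2*c/n) * (1 + 4*c/n) / m^3 ≤ (1+2*t) * (1+4*t) / m := by
      rw [div_le_div_iff₀ (by positivity) hm0]
      have h1' : 0 ≤ 1 + 2*c/n := by positivity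
      have h2' : 0 ≤ 1 + 4*c/n := by positivity
      nlinarith [mul_le_mul h1 h2 h2' (by positivity : (0:ℝ) ≤ m*(1+2*t))]
    calc (c/(3*n)) * ((k:ℝ)/m)^(4*c/n) * ((1 + 2*c/n) * (1 + 4*c/n) / m^3)
        ≤ (x/3) * Real.exp (-(4*t)) * ((1+2*t) * (1+4*t) / m) := by
          rw [hcn]
          apply mul_le_mul
          · exact mul_le_mul_of_nonneg_left hB (by positivity)
          · exact hfac
          · positivity
          · positivity
    _ = (t/3) * (1+2*t) * (1+4*t) * Real.exp (-(4*t)) := by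
          rw [hxtm]; field_simp
  -- Step 2: (t/3)(1+2t)(1+4t) < exp(4t)
  have hP2 : (t/3) * (1+2*t) * (1+4*t) < Real.exp (4*t) := by
    have key : (t/3) * (1+2*t) * (1+4*t) < 1 + 4*t + (4*t)^2/2 + (4*t)^3/6 := by
      nlinarith [mul_pos ht0 ht0, mul_pos (mul_pos ht0 ht0) ht0]
    linarith
  have hP3 : (t/3) * (1+2*t) * (1+4*t) * Real.exp (-(4*t)) < 1 := by
    have := mul_lt_mul_of_pos_right hP2 hEpos
    calc (t/3) * (1+2*t) * (1+4*t) * Real.exp (-(4*t))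
        < Real.exp (4*t) * Real.exp (-(4*t)) := this
    _ = 1 := by rw [← Real.exp_add]; simp
  have hPlt : (c/(3*n)) * ((k:ℝ)/m)^(4*c/n) * ((1 + 2*c/n) * (1 + 4*c/n) / m^3) < 1 :=
    lt_of_le_of_lt hP1 hP3
  have hPpos : 0 < (c/(3*n)) * ((k:ℝ)/m)^(4*c/n) * ((1 + 2*c/n) * (1 + 4*c/n) / m^3) := by
    have : 0 < (1 + 2*c/n) * (1 + 4*c/n) / m^3 := by positivity
    positivity
  constructor <;> simp only [hm] at hPlt hPpos ⊢ <;> linarith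
end

section
/- Let n > 0 and suppose a sequence of positive reals (υ_i) satisfies: (i) for every k, F_k := (1 + 2/n)((1/k)∑_{i=1}^k υ_i)² - (1/k)∑_{i=1}^k υ_i² satisfies F_{k+l}/(k+l)^{4/n} ≤ F_k/k^{4/n} for all positive integers l; (ii) lim_{m→∞} ((1/m)∑_{i=1}^m υ_i)/m^{2/n} = a(n) and lim_{m→∞} ((1/m)∑_{i=1}^m υ_i²)/m^{4/n} = b(n), where a(n) = (n/(n+2))·c and b(n) = (n/(n+4))·c² for some constant c > 0. Then for every positive integer k, (1/k)∑_{i=1}^k υ_i ≥ (n/√((n+2)(n+4)))·c·k^{2/n}. -/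
theorem stmt_16 (n c : ℝ) (hn : 0 < n) (hc : 0 < c) (ups : ℕ → ℝ)
    (hpos : ∀ i, 1 ≤ i → 0 < ups i)
    (F : ℕ → ℝ)
    (hFdef : ∀ k : ℕ, 1 ≤ k →
      F k = (1 + 2/n) * ((1/(k:ℝ)) * ∑ i ∈ Finset.Icc 1 k, ups i)^2
        - (1/(k:ℝ)) * ∑ i ∈ Finset.Icc 1 k, (ups i)^2)
    (hFmono : ∀ k l : ℕ, 1 ≤ k → 1 ≤ l →
      F (k+l) / ((k:ℝ)+(l:ℝ))^(4/n) ≤ F k / (k:ℝ)^(4/n))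
    (hlim1 : Filter.Tendsto
      (fun m : ℕ => ((1/(m:ℝ)) * ∑ i ∈ Finset.Icc 1 m, ups i) / (m:ℝ)^(2/n))
      Filter.atTop (nhds ((n/(n+2)) * c)))
    (hlim2 : Filter.Tendsto
      (fun m : ℕ => ((1/(m:ℝ)) * ∑ i ∈ Finset.Icc 1 m, (ups i)^2) / (m:ℝ)^(4/n))
      Filter.atTop (nhds ((n/(n+4)) * c^2))) :
    ∀ k : ℕ, 1 ≤ k →
      (1/(k:ℝ)) * ∑ i ∈ Finset.Icc 1 k, ups i
        ≥ (n / Real.sqrt ((n+2)*(n+4))) * c * (k:ℝ)^(2/n) := by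
  have hn2 : (0:ℝ) < n + 2 := by linarith
  have hn4 : (0:ℝ) < n + 4 := by linarith
  set L : ℝ := 2*n/((n+2)*(n+4)) * c^2 with hL
  -- the sequence F m / m^(4/n) tends to L
  have hsq : ∀ m : ℕ, 1 ≤ m → ((m:ℝ)^(2/n))^2 = (m:ℝ)^(4/n) := by
    intro m hm
    rw [← Real.rpow_natCast ((m:ℝ)^(2/n)) 2, ← Real.rpow_mul (Nat.cast_nonneg m)]
    norm_num
    ring_nf
  have hg : Filter.Tendsto (fun m : ℕ => F m / (m:ℝ)^(4/n)) Filter.atTop (nhds L) := by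
    have h1 : Filter.Tendsto
        (fun m : ℕ => (1 + 2/n) * (((1/(m:ℝ)) * ∑ i ∈ Finset.Icc 1 m, ups i) / (m:ℝ)^(2/n))^2
          - ((1/(m:ℝ)) * ∑ i ∈ Finset.Icc 1 m, (ups i)^2) / (m:ℝ)^(4/n))
        Filter.atTop (nhds ((1 + 2/n) * ((n/(n+2)) * c)^2 - (n/(n+4)) * c^2)) :=
      ((hlim1.pow 2).const_mul _).sub hlim2
    have hval : (1 + 2/n) * ((n/(n+2)) * c)^2 - (n/(n+4)) * c^2 = L := by
      rw [hL]; field_simp; ring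
    rw [hval] at h1
    refine h1.congr' ?_
    filter_upwards [Filter.eventually_ge_atTop 1] with m hm
    have hm0 : (0:ℝ) < (m:ℝ) := by exact_mod_cast hm
    have hP : (0:ℝ) < (m:ℝ)^(4/n) := Real.rpow_pos_of_pos hm0 _
    rw [hFdef m hm]
    have h2 : (((1/(m:ℝ)) * ∑ i ∈ Finset.Icc 1 m, ups i) / (m:ℝ)^(2/n))^2
        = ((1/(m:ℝ)) * ∑ i ∈ Finset.Icc 1 m, ups i)^2 / (m:ℝ)^(4/n) := by
      rw [div_pow, hsq m hm]
    rw [sub_div, mul_div_assoc]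
    linear_combination (1 + 2/n) * h2
  -- lower bound F k / k^(4/n) ≥ L for each k ≥ 1
  intro k hk
  have hk0 : (0:ℝ) < (k:ℝ) := by exact_mod_cast hk
  have hkP : (0:ℝ) < (k:ℝ)^(4/n) := Real.rpow_pos_of_pos hk0 _
  have htail : Filter.Tendsto (fun l : ℕ => F (k+l) / ((k:ℝ)+(l:ℝ))^(4/n))
      Filter.atTop (nhds L) := by
    have := hg.comp (Filter.tendsto_add_atTop_nat k)
    refine this.congr (fun l => ?_)
    simp only [Function.comp]
    rw [Nat.add_comm l k, Nat.cast_add]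
  have hLle : L ≤ F k / (k:ℝ)^(4/n) := by
    refine le_of_tendsto htail ?_
    filter_upwards [Filter.eventually_ge_atTop 1] with l hl
    exact hFmono k l hk hl
  -- Cauchy–Schwarz
  set A : ℝ := (1/(k:ℝ)) * ∑ i ∈ Finset.Icc 1 k, ups i with hA
  have hApos : 0 < A := by
    rw [hA]
    have : 0 < ∑ i ∈ Finset.Icc 1 k, ups i := by
      apply Finset.sum_pos
      · intro i hi; exact hpos i (Finset.mem_Icc.mp hi).1
      · exact ⟨1, Finset.mem_Icc.mpr ⟨le_refl 1, hk⟩⟩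
    positivity
  have hcard : (Finset.Icc 1 k).card = k := by simp
  have hCS : A^2 ≤ (1/(k:ℝ)) * ∑ i ∈ Finset.Icc 1 k, (ups i)^2 := by
    have := sq_sum_le_card_mul_sum_sq (s := Finset.Icc 1 k) (f := ups)
    rw [hcard] at this
    rw [hA, mul_pow]
    calc (1/(k:ℝ))^2 * (∑ i ∈ Finset.Icc 1 k, ups i)^2
        ≤ (1/(k:ℝ))^2 * ((k:ℝ) * ∑ i ∈ Finset.Icc 1 k, (ups i)^2) := by
          apply mul_le_mul_of_nonneg_left _ (by positivity)
          exact_mod_cast this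
      _ = (1/(k:ℝ)) * ∑ i ∈ Finset.Icc 1 k, (ups i)^2 := by
          field_simp
  have hFk : L * (k:ℝ)^(4/n) ≤ F k := (le_div_iff₀ hkP).mp hLle
  have hFle : F k ≤ (2/n) * A^2 := by
    rw [hFdef k hk, ← hA]
    have : (1 + 2/n) * A^2 - (1/(k:ℝ)) * ∑ i ∈ Finset.Icc 1 k, (ups i)^2
        ≤ (1 + 2/n) * A^2 - A^2 := by linarith
    calc (1 + 2/n) * A^2 - (1/(k:ℝ)) * ∑ i ∈ Finset.Icc 1 k, (ups i)^2
        ≤ (1 + 2/n) * A^2 - A^2 := this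
      _ = (2/n) * A^2 := by field_simp; ring
  -- combine
  set T : ℝ := (n / Real.sqrt ((n+2)*(n+4))) * c * (k:ℝ)^(2/n) with hT
  have hsqrtpos : 0 < Real.sqrt ((n+2)*(n+4)) := Real.sqrt_pos.mpr (by positivity)
  have hTpos : 0 < T := by rw [hT]; positivity
  have hT2 : T^2 = L * (k:ℝ)^(4/n) * (n/2) := by
    rw [hT, hL, mul_pow, mul_pow, div_pow, Real.sq_sqrt (by positivity : (0:ℝ) ≤ (n+2)*(n+4)),
      hsq k hk]
    ring
  have hA2 : T^2 ≤ A^2 := by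
    rw [hT2]
    have h1 : L * (k:ℝ)^(4/n) ≤ (2/n) * A^2 := le_trans hFk hFle
    have h2 : L * (k:ℝ)^(4/n) * (n/2) ≤ (2/n) * A^2 * (n/2) :=
      mul_le_mul_of_nonneg_right h1 (by positivity)
    calc L * (k:ℝ)^(4/n) * (n/2) ≤ (2/n) * A^2 * (n/2) := h2
      _ = A^2 := by field_simp
  have : T ≤ A := by
    nlinarith [hTpos, hApos, hA2]
  exact this
end
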